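/- The linear operators R₁ (R₁(e₁₁)=e₁₂, R₁(e₁₂)=0, R₁(e₂₁)=0, R₁(e₂₂)=−e₁₂) and R₂ (R₂(e₁₁)=0, R₂(e₁₂)=e₁₁, R₂(e₂₁)=e₁₁, R₂(e₂₂)=0) are both symmetrized Rota–Baxter operators of weight 0 on the associative algebra M₂(F). -/

import Mathlib

def E (F : Type*) [Field F] (i j : Fin 2) : Matrix (Fin 2) (Fin 2) F :=
  Matrix.single i j 1

lemma matrix_decomp {F : Type*} [Field F] (M : Matrix (Fin 2) (Fin 2) F) :
    M = M 0 0 • E F 0 0 + M 0 1 • E F 0 1 + M 1 0 • E F 1 0 + M 1 1 • E F 1 1 := by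
  ext i j
  fin_cases i <;> fin_cases j <;>
    simp [E, Matrix.single, Matrix.add_apply, Matrix.smul_apply]

theorem both_are_symmetrized_RB {F : Type*} [Field F] (h2 : (2 : F) ≠ 0)
    (R₁ R₂ : Matrix (Fin 2) (Fin 2) F →ₗ[F] Matrix (Fin 2) (Fin 2) F)
    (h₁11 : R₁ (E F 0 0) = E F 0 1) (h₁12 : R₁ (E F 0 1) = 0)
    (h₁21 : R₁ (E F 1 0) = 0) (h₁22 : R₁ (E F 1 1) = -E F 0 1)
    (h₂11 : R₂ (E F 0 0) = 0) (h₂12 : R₂ (E F 0 1) = E F 0 0)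
    (h₂21 : R₂ (E F 1 0) = E F 0 0) (h₂22 : R₂ (E F 1 1) = 0) :
    (∀ x y : Matrix (Fin 2) (Fin 2) F,
      (2 : F) • (R₁ x * R₁ y) = R₁ (R₁ x * y + x * R₁ y + y * R₁ x + R₁ y * x)) ∧
    (∀ x y : Matrix (Fin 2) (Fin 2) F,
      (2 : F) • (R₂ x * R₂ y) = R₂ (R₂ x * y + x * R₂ y + y * R₂ x + R₂ y * x)) := by
  have hR₁ : ∀ M : Matrix (Fin 2) (Fin 2) F, R₁ M = (M 0 0 - M 1 1) • E F 0 1 := by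
    intro M
    conv_lhs => rw [matrix_decomp M]
    simp only [map_add, map_smul, h₁11, h₁12, h₁21, h₁22, smul_zero, smul_neg, sub_smul]
    abel
  have hR₂ : ∀ M : Matrix (Fin 2) (Fin 2) F, R₂ M = (M 0 1 + M 1 0) • E F 0 0 := by
    intro M
    conv_lhs => rw [matrix_decomp M]
    simp only [map_add, map_smul, h₂11, h₂12, h₂21, h₂22, smul_zero, add_smul]
    abel
  constructor <;> intro x y <;>
    simp only [hR₁, hR₂] <;> ext i j <;> fin_cases i <;> fin_cases j <;>
    simp [E, Matrix.single, Matrix.mul_apply, Matrix.add_apply,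
      Matrix.smul_apply, Fin.sum_univ_two, Matrix.sub_apply] <;> ring
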